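/- Let G = (V,E) be a finite graph with optimal density d* = max over nonempty S ⊆ V of |E(S)|/|S|. Then the optimal value of the linear program maximizing ∑_{e∈E} y_e subject to ∑_{i∈V} x_i = 1, y_e ≤ x_i for every edge e and endpoint i of e, and x, y ≥ 0, equals d*. -/

import Mathlib

noncomputable def edgeMin {V : Type*} (x : V → ℝ) : Sym2 V → ℝ :=
  Sym2.lift ⟨fun a b => min (x a) (x b), fun a b => min_comm _ _⟩

lemma edgeMin_s {V : Type*} (x : V → ℝ) (a b : V) :
    edgeMin x (s(a, b)) = min (x a) (x b) := rfl

lemma key_lemma {V : Type*} [Fintype V] [DecidableEq V]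
    (G : SimpleGraph V) [DecidableRel G.Adj] (dstar : ℝ)
    (hub : ∀ S : Finset V, S.Nonempty →
      ((G.edgeFinset.filter (fun e => ∀ v ∈ e, v ∈ S)).card : ℝ) ≤ dstar * S.card) :
    ∀ (n : ℕ) (x : V → ℝ), (∀ i, 0 ≤ x i) → {i | x i ≠ 0}.ncard ≤ n →
      ∑ e ∈ G.edgeFinset, edgeMin x e ≤ dstar * ∑ i, x i := by
  intro n
  induction n with
  | zero =>
    intro x hx hcard
    have hzero : ∀ i, x i = 0 := by
      intro i
      by_contra h
      have hfin : {i | x i ≠ 0}.Finite := Set.toFinite _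
      have : 0 < {i | x i ≠ 0}.ncard := (Set.ncard_pos hfin).mpr ⟨i, h⟩
      omega
    have h1 : ∀ e ∈ G.edgeFinset, edgeMin x e = 0 := by
      intro e _
      induction e with
      | _ a b => simp [edgeMin_s, hzero]
    rw [Finset.sum_congr rfl h1]
    simp [hzero]
  | succ n ih =>
    intro x hx hcard
    classical
    by_cases hsup : {i | x i ≠ 0} = ∅
    · have hzero : ∀ i, x i = 0 := by
        intro i; by_contra h
        exact (Set.eq_empty_iff_forall_notMem.mp hsup i) h
      have h1 : ∀ e ∈ G.edgeFinset, edgeMin x e = 0 := by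
        intro e _
        induction e with
        | _ a b => simp [edgeMin_s, hzero]
      rw [Finset.sum_congr rfl h1]
      simp [hzero]
    · set S : Finset V := Finset.univ.filter (fun i => x i ≠ 0) with hS
      have hSmem : ∀ i, i ∈ S ↔ x i ≠ 0 := by intro i; simp [hS]
      have hSne : S.Nonempty := by
        rcases Set.nonempty_iff_ne_empty.mpr hsup with ⟨i, hi⟩
        exact ⟨i, (hSmem i).mpr hi⟩
      have himg : (S.image x).Nonempty := hSne.image x
      set m : ℝ := (S.image x).min' himg with hm
      have hmmem : m ∈ S.image x := Finset.min'_mem _ _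
      obtain ⟨i0, hi0S, hi0⟩ := Finset.mem_image.mp hmmem
      have hmpos : 0 < m := by
        rcases lt_or_eq_of_le (hx i0) with h | h
        · rw [← hi0]; exact h
        · exact absurd h.symm ((hSmem i0).mp hi0S)
      have hmle : ∀ i ∈ S, m ≤ x i := fun i hi =>
        Finset.min'_le _ _ (Finset.mem_image_of_mem x hi)
      set x' : V → ℝ := fun i => if x i ≠ 0 then x i - m else 0 with hx'def
      have hx' : ∀ i, 0 ≤ x' i := by
        intro i
        simp only [hx'def]
        split
        · rename_i h
          have := hmle i ((hSmem i).mpr h)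
          linarith
        · exact le_refl 0
      -- support of x' strictly smaller
      have hsub : {i | x' i ≠ 0} ⊆ {i | x i ≠ 0} := by
        intro i hi
        simp only [Set.mem_setOf_eq, hx'def] at hi ⊢
        by_contra h
        simp [h] at hi
      have hi0x' : x' i0 = 0 := by
        simp only [hx'def]
        rw [if_pos ((hSmem i0).mp hi0S)]
        linarith [hi0]
      have hcard' : {i | x' i ≠ 0}.ncard ≤ n := by
        have hlt : {i | x' i ≠ 0}.ncard < {i | x i ≠ 0}.ncard := by
          apply Set.ncard_lt_ncard
          · constructor
            · exact hsub
            · intro h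
              have : i0 ∈ {i | x' i ≠ 0} := h ((hSmem i0).mp hi0S)
              exact this hi0x'
          · exact Set.toFinite _
        omega
      -- pointwise identity
      have hpt : ∀ e ∈ G.edgeFinset,
          edgeMin x e = (if (∀ v ∈ e, v ∈ S) then m else 0) + edgeMin x' e := by
        intro e _
        induction e with
        | _ a b =>
          rw [edgeMin_s, edgeMin_s]
          have hmemab : (∀ v ∈ s(a, b), v ∈ S) ↔ (a ∈ S ∧ b ∈ S) := by
            constructor
            · intro h
              exact ⟨h a (by simp), h b (by simp)⟩
            · rintro ⟨h1, h2⟩ v hv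
              rcases Sym2.mem_iff.mp hv with rfl | rfl
              · exact h1
              · exact h2
          by_cases ha : x a = 0
          · have hb : 0 ≤ x b := hx b
            have hxa' : x' a = 0 := by simp [hx'def, ha]
            have : ¬ (∀ v ∈ s(a, b), v ∈ S) := by
              rw [hmemab]
              rintro ⟨h1, _⟩
              exact ((hSmem a).mp h1) ha
            rw [if_neg this, ha, hxa']
            rw [min_eq_left hb, min_eq_left (hx' b)]
            ring
          · by_cases hb : x b = 0
            · have hxb' : x' b = 0 := by simp [hx'def, hb]
              have : ¬ (∀ v ∈ s(a, b), v ∈ S) := by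
                rw [hmemab]
                rintro ⟨_, h2⟩
                exact ((hSmem b).mp h2) hb
              rw [if_neg this, hb, hxb']
              rw [min_eq_right (hx a), min_eq_right (hx' a)]
              ring
            · have : (∀ v ∈ s(a, b), v ∈ S) := by
                rw [hmemab]
                exact ⟨(hSmem a).mpr ha, (hSmem b).mpr hb⟩
              rw [if_pos this]
              have hxa' : x' a = x a - m := by simp [hx'def, ha]
              have hxb' : x' b = x b - m := by simp [hx'def, hb]
              rw [hxa', hxb']
              rcases le_total (x a) (x b) with h | h
              · rw [min_eq_left h, min_eq_left (by linarith)]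
                ring
              · rw [min_eq_right h, min_eq_right (by linarith)]
                ring
      rw [Finset.sum_congr rfl hpt, Finset.sum_add_distrib]
      have hsum1 : ∑ e ∈ G.edgeFinset, (if (∀ v ∈ e, v ∈ S) then m else 0)
          = ((G.edgeFinset.filter (fun e => ∀ v ∈ e, v ∈ S)).card : ℝ) * m := by
        rw [← Finset.sum_filter, Finset.sum_const, nsmul_eq_mul]
      have hxsum : ∑ i, x i = m * S.card + ∑ i, x' i := by
        have : ∀ i, x i = (if x i ≠ 0 then m else 0) + x' i := by
          intro i
          simp only [hx'def]
          split
          · ring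
          · rename_i h
            push_neg at h
            rw [h]; ring
        rw [Finset.sum_congr rfl (fun i _ => this i), Finset.sum_add_distrib]
        congr 1
        rw [← Finset.sum_filter, Finset.sum_const, nsmul_eq_mul, ← hS]
        ring
      rw [hsum1, hxsum]
      have h1 : ((G.edgeFinset.filter (fun e => ∀ v ∈ e, v ∈ S)).card : ℝ) * m
          ≤ dstar * S.card * m := by
        apply mul_le_mul_of_nonneg_right (hub S hSne) (le_of_lt hmpos)
      have h2 : ∑ e ∈ G.edgeFinset, edgeMin x' e ≤ dstar * ∑ i, x' i :=
        ih x' hx' hcard'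
      nlinarith [h1, h2]

theorem stmt_17 {V : Type*} [Fintype V] [DecidableEq V] [Nonempty V]
    (G : SimpleGraph V) [DecidableRel G.Adj]
    (dstar : ℝ)
    (hd : IsGreatest {d : ℝ | ∃ S : Finset V, S.Nonempty ∧
      d = ((G.edgeFinset.filter (fun e => ∀ v ∈ e, v ∈ S)).card : ℝ) / (S.card : ℝ)} dstar) :
    IsGreatest {v : ℝ | ∃ (x : V → ℝ) (y : Sym2 V → ℝ),
      (∑ i, x i) = 1 ∧
      (∀ i, 0 ≤ x i) ∧
      (∀ e ∈ G.edgeFinset, 0 ≤ y e) ∧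
      (∀ e ∈ G.edgeFinset, ∀ i ∈ e, y e ≤ x i) ∧
      v = ∑ e ∈ G.edgeFinset, y e} dstar := by
  classical
  obtain ⟨⟨S, hSne, hSd⟩, hub⟩ := hd
  have hScard : (0 : ℝ) < S.card := by
    exact_mod_cast Finset.card_pos.mpr hSne
  constructor
  · -- membership: construct feasible solution
    refine ⟨fun i => if i ∈ S then (S.card : ℝ)⁻¹ else 0,
      fun e => if (∀ v ∈ e, v ∈ S) then (S.card : ℝ)⁻¹ else 0, ?_, ?_, ?_, ?_, ?_⟩
    · dsimp only
      rw [← Finset.sum_filter, Finset.sum_const, nsmul_eq_mul,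
        Finset.filter_mem_eq_inter, Finset.univ_inter]
      field_simp
    · intro i
      dsimp only
      split
      · positivity
      · exact le_refl 0
    · intro e _
      dsimp only
      split
      · positivity
      · exact le_refl 0
    · intro e _ i hi
      dsimp only
      split
      · rename_i h
        rw [if_pos (h i hi)]
      · split
        · positivity
        · exact le_refl 0
    · dsimp only
      rw [hSd, ← Finset.sum_filter, Finset.sum_const, nsmul_eq_mul]
      field_simp
  · -- upper bound
    rintro v ⟨x, y, hx1, hx0, hy0, hyx, rfl⟩
    have hub' : ∀ T : Finset V, T.Nonempty →
        ((G.edgeFinset.filter (fun e => ∀ v ∈ e, v ∈ T)).card : ℝ) ≤ dstar * T.card := by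
      intro T hTne
      have hTcard : (0 : ℝ) < T.card := by exact_mod_cast Finset.card_pos.mpr hTne
      have := hub ⟨T, hTne, rfl⟩
      rw [div_le_iff₀ hTcard] at this
      linarith
    have hkey := key_lemma G dstar hub' ({i | x i ≠ 0}.ncard) x hx0 (le_refl _)
    have hymin : ∀ e ∈ G.edgeFinset, y e ≤ edgeMin x e := by
      intro e he
      induction e with
      | _ a b =>
        rw [edgeMin_s]
        exact le_min (hyx _ he a (by simp)) (hyx _ he b (by simp))
    calc ∑ e ∈ G.edgeFinset, y e ≤ ∑ e ∈ G.edgeFinset, edgeMin x e :=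
          Finset.sum_le_sum hymin
      _ ≤ dstar * ∑ i, x i := hkey
      _ = dstar := by rw [hx1, mul_one]
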